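/- arXiv:2306.15148 — 4 statements merged into one kernel-verified Lean document; each statement's English description precedes it below -/
import Mathlib

section
/- Let N > K ≥ 1 with N − K ≥ 1, and consider N qubits: a first star with leaves 0,…,K−2 and center K−1, and a second star with leaves K,…,N−2 and center N−1. Then the caterpillar graph state of central-path length 1, i.e. the result of applying ( ∏_{j=0}^{K−2} CZ_{j,K−1} ) · ( ∏_{j=K}^{N−2} CZ_{j,N−1} ) · CZ_{K−1,N−1} to |+⟩^{⊗N}, equals (1/2)·[ ( |+⟩^{⊗(K−1)}⊗|0⟩ + |−⟩^{⊗(K−1)}⊗|1⟩ ) ⊗ ( |+⟩^{⊗(N−K−1)}⊗|0⟩ ) + ( |+⟩^{⊗(K−1)}⊗|0⟩ − |−⟩^{⊗(K−1)}⊗|1⟩ ) ⊗ ( |−⟩^{⊗(N−K−1)}⊗|1⟩ ) ], where in each star the last tensor factor is its center qubit. -/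
open Finset

/-- The single-qubit computational basis state `|0⟩`. -/
noncomputable def ket0 : Fin 2 → ℂ := fun t => if t = 0 then 1 else 0

/-- The single-qubit computational basis state `|1⟩`. -/
noncomputable def ket1 : Fin 2 → ℂ := fun t => if t = 1 then 1 else 0

/-- The single-qubit state `|+⟩ = (|0⟩ + |1⟩)/√2`. -/
noncomputable def ketP : Fin 2 → ℂ := fun t => (ket0 t + ket1 t) / Real.sqrt 2

/-- The single-qubit state `|−⟩ = (|0⟩ − |1⟩)/√2`. -/
noncomputable def ketM : Fin 2 → ℂ := fun t => (ket0 t - ket1 t) / Real.sqrt 2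

/-- The controlled-Z gate acting on qubits `j` and `k` of an `n`-qubit state:
`(CZ_{j,k} ψ)(x) = (−1)^{x_j · x_k} · ψ(x)`. -/
def CZ {n : ℕ} (j k : Fin n) (ψ : (Fin n → Fin 2) → ℂ) : (Fin n → Fin 2) → ℂ :=
  fun x => (-1 : ℂ) ^ ((x j : ℕ) * (x k : ℕ)) * ψ x

/-- Apply a product of controlled-Z gates, one for each (ordered) pair in the list. -/
def applyCZs {n : ℕ} (es : List (Fin n × Fin n)) (ψ : (Fin n → Fin 2) → ℂ) :
    (Fin n → Fin 2) → ℂ :=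
  es.foldr (fun e acc => CZ e.1 e.2 acc) ψ

/-- The product state of single-qubit states `φ_j`, i.e. `x ↦ ∏_j φ_j(x_j)`. -/
noncomputable def prodState {n : ℕ} (φ : Fin n → Fin 2 → ℂ) : (Fin n → Fin 2) → ℂ :=
  fun x => ∏ j, φ j (x j)

lemma applyCZs_apply {n : ℕ} (es : List (Fin n × Fin n)) (ψ : (Fin n → Fin 2) → ℂ)
    (x : Fin n → Fin 2) :
    applyCZs es ψ x = (es.map fun e => ((-1:ℂ)^((x e.1 : ℕ) * (x e.2 : ℕ)))).prod * ψ x := by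
  induction es with
  | nil => simp [applyCZs]
  | cons e t ih =>
    simp only [applyCZs, List.foldr_cons, List.map_cons, List.prod_cons] at *
    rw [show (CZ e.1 e.2 (List.foldr (fun e acc => CZ e.1 e.2 acc) ψ t)) x
      = (-1:ℂ)^((x e.1 : ℕ) * (x e.2 : ℕ)) * (List.foldr (fun e acc => CZ e.1 e.2 acc) ψ t) x from rfl,
      ih]
    ring

lemma fin2cases (a : Fin 2) : a = 0 ∨ a = 1 := by omega

lemma ketP_eq (t : Fin 2) : ketP t = ((Real.sqrt 2 : ℝ) : ℂ)⁻¹ := by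
  fin_cases t <;> simp [ketP, ket0, ket1]

lemma ketM_eq (t : Fin 2) : ketM t = (-1)^(t:ℕ) * ((Real.sqrt 2 : ℝ) : ℂ)⁻¹ := by
  fin_cases t <;> simp [ketM, ket0, ket1] <;> ring

/-- The caterpillar graph state of central-path length 1 on `N` qubits (`N > K ≥ 1`,
`N − K ≥ 1`): a star with leaves `0,…,K−2` and center `K−1`, a star with leaves
`K,…,N−2` and center `N−1`, and the centers joined by a CZ gate.  Applying
`(∏_{j<K−1} CZ_{j,K−1}) (∏_{j=K}^{N−2} CZ_{j,N−1}) CZ_{K−1,N−1}` to `|+⟩^{⊗N}` yields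
`(1/2)·[(|+⟩^{⊗(K−1)}⊗|0⟩ + |−⟩^{⊗(K−1)}⊗|1⟩) ⊗ (|+⟩^{⊗(N−K−1)}⊗|0⟩)
 + (|+⟩^{⊗(K−1)}⊗|0⟩ − |−⟩^{⊗(K−1)}⊗|1⟩) ⊗ (|−⟩^{⊗(N−K−1)}⊗|1⟩)]`. -/
theorem caterpillar_path1_state (N K : ℕ) (hK : 1 ≤ K) (hKN : K < N) (hNK : 1 ≤ N - K) :
    applyCZs
        (((List.finRange (K - 1)).map fun j : Fin (K - 1) =>
            ((⟨j, by have := j.isLt; omega⟩ : Fin N), (⟨K - 1, by omega⟩ : Fin N))) ++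
          ((List.finRange (N - K - 1)).map fun j : Fin (N - K - 1) =>
            ((⟨K + j, by have := j.isLt; omega⟩ : Fin N), (⟨N - 1, by omega⟩ : Fin N))) ++
          [((⟨K - 1, by omega⟩ : Fin N), (⟨N - 1, by omega⟩ : Fin N))])
        (prodState fun _ => ketP) =
      fun x : Fin N → Fin 2 =>
        (1 / 2 : ℂ) *
          (((∏ j : Fin (K - 1), ketP (x ⟨j, by have := j.isLt; omega⟩)) *
                  ket0 (x ⟨K - 1, by omega⟩) +
                (∏ j : Fin (K - 1), ketM (x ⟨j, by have := j.isLt; omega⟩)) *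
                  ket1 (x ⟨K - 1, by omega⟩)) *
              ((∏ j : Fin (N - K - 1), ketP (x ⟨K + j, by have := j.isLt; omega⟩)) *
                ket0 (x ⟨N - 1, by omega⟩)) +
            ((∏ j : Fin (K - 1), ketP (x ⟨j, by have := j.isLt; omega⟩)) *
                  ket0 (x ⟨K - 1, by omega⟩) -
                (∏ j : Fin (K - 1), ketM (x ⟨j, by have := j.isLt; omega⟩)) *
                  ket1 (x ⟨K - 1, by omega⟩)) *
              ((∏ j : Fin (N - K - 1), ketM (x ⟨K + j, by have := j.isLt; omega⟩)) *
                ket1 (x ⟨N - 1, by omega⟩))) := by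
  have hs : ((Real.sqrt 2 : ℝ) : ℂ)⁻¹ ^ 2 = 1/2 := by
    have h2 : ((Real.sqrt 2 : ℝ) : ℂ)^2 = 2 := by
      norm_cast; rw [Real.sq_sqrt (by norm_num)]
    rw [inv_pow, h2]; norm_num
  have hsN : ((Real.sqrt 2 : ℝ) : ℂ)⁻¹ ^ N
      = ((Real.sqrt 2 : ℝ) : ℂ)⁻¹^(K-1) * ((Real.sqrt 2 : ℝ) : ℂ)⁻¹^(N-K-1) * (1/2) := by
    conv_lhs => rw [show N = (K-1) + (N-K-1) + 2 by omega]
    rw [pow_add, pow_add, hs]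
  funext x
  rw [applyCZs_apply]
  simp only [List.map_append, List.prod_append, List.map_map, List.map_cons, List.map_nil,
    List.prod_cons, List.prod_nil, Function.comp_apply]
  rw [show prodState (fun _ => ketP) x = ∏ i : Fin N, ketP (x i) from rfl]
  rw [← Fin.prod_univ_def, ← Fin.prod_univ_def]
  simp only [ketP_eq, ketM_eq, prod_mul_distrib, prod_const, card_univ, Fintype.card_fin]
  rcases fin2cases (x ⟨K - 1, by omega⟩) with h1 | h1 <;>
    rcases fin2cases (x ⟨N - 1, by omega⟩) with h2 | h2 <;>
      simp only [Function.comp_apply, h1, h2, ket0, ket1, Fin.val_zero, Fin.val_one,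
        Nat.mul_zero, Nat.zero_mul, Nat.mul_one, Nat.one_mul, pow_zero, pow_one, prod_const_one,
        show ((0:Fin 2) = 1) = False by simp, show ((1:Fin 2) = 0) = False by simp,
        show ((0:Fin 2) = 0) = True by simp, show ((1:Fin 2) = 1) = True by simp,
        if_true, if_false, hsN] <;> ring
end

section
/- For every l ≥ 2, the number of directed perfect matchings of the central path digraph P^(l) equals twice the number of directed perfect matchings of P^(l−1); that is, the cardinality of { σ : Perm (Fin (l+2)) | ∀ i, P^(l)_{i,σ(i)} ≠ 0 } is 2 times the cardinality of { σ : Perm (Fin (l+1)) | ∀ i, P^(l−1)_{i,σ(i)} ≠ 0 }. -/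
/-- The central path digraph adjacency matrix `P^(l)` (of size `(l+2) × (l+2)`, meaningful
for `l ≥ 1`): `P^(1)` has rows `(1,1,1), (1,1,0), (1,−1,1)`; for `l ≥ 2` the top-left
`(l+1) × (l+1)` block of `P^(l)` is `P^(l−1)`, its last column is `(1,0,…,0,1)ᵀ` and its
last row is `(1,1,…,1,−1,1)`. -/
def Pmat : (l : ℕ) → Matrix (Fin (l + 2)) (Fin (l + 2)) ℤ
  | 0 => !![1, 1; 1, 1]
  | 1 => !![1, 1, 1; 1, 1, 0; 1, -1, 1]
  | (l + 2) => fun i j =>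
      if hi : (i : ℕ) < l + 3 then
        if hj : (j : ℕ) < l + 3 then Pmat (l + 1) ⟨i, hi⟩ ⟨j, hj⟩
        else if (i : ℕ) = 0 then 1 else 0
      else
        if (j : ℕ) = l + 2 then -1 else 1

lemma Pmat_block (l : ℕ) (i j : Fin (l+3)) :
    Pmat (l+2) i.castSucc j.castSucc = Pmat (l+1) i j := by
  simp only [Pmat, Fin.coe_castSucc]
  rw [dif_pos i.isLt, dif_pos j.isLt]

lemma Pmat_row0 : ∀ l (j : Fin (l+2)), Pmat l 0 j = 1
  | 0, j => by fin_cases j <;> rfl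
  | 1, j => by fin_cases j <;> rfl
  | (l+2), j => by
      by_cases hj : (j:ℕ) < l+3
      · have h0 : ((0 : Fin (l+4)) : ℕ) < l+3 := by simp
        have h : Pmat (l+2) 0 j = Pmat (l+1) ⟨(0 : Fin (l+4)), h0⟩ ⟨j, hj⟩ := by
          simp only [Pmat]; rw [dif_pos h0, dif_pos hj]
        rw [h]
        have h2 : (⟨((0 : Fin (l+4)) : ℕ), h0⟩ : Fin (l+3)) = 0 := by ext; simp
        rw [h2]
        exact Pmat_row0 (l+1) _
      · simp only [Pmat]
        rw [dif_pos (by simp : ((0 : Fin (l+4)) : ℕ) < l+3), dif_neg hj]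
        simp

lemma Pmat_lastrow (l : ℕ) (j : Fin (l+4)) : Pmat (l+2) (Fin.last (l+3)) j ≠ 0 := by
  simp only [Pmat, Fin.val_last]
  rw [dif_neg (by omega)]
  split <;> norm_num

lemma Pmat_lastcol (l : ℕ) (i : Fin (l+4)) (hi : i ≠ 0) (hl : i ≠ Fin.last (l+3)) :
    Pmat (l+2) i (Fin.last (l+3)) = 0 := by
  have h1 : (i : ℕ) < l+3 := by
    have h2 := i.isLt
    have h3 : (i:ℕ) ≠ l+3 := fun h => hl (Fin.ext h)
    omega
  simp only [Pmat, Fin.val_last]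
  rw [dif_pos h1, dif_neg (by omega)]
  split_ifs with h
  · exact absurd (Fin.ext h) hi
  · rfl

def pext (n : ℕ) (τ : Equiv.Perm (Fin n)) : Equiv.Perm (Fin (n+1)) :=
  Equiv.permCongr (finSuccEquivLast).symm (Equiv.optionCongr τ)

lemma pext_castSucc (n : ℕ) (τ : Equiv.Perm (Fin n)) (i : Fin n) :
    pext n τ i.castSucc = (τ i).castSucc := by
  simp [pext, Equiv.permCongr_apply]

lemma pext_last (n : ℕ) (τ : Equiv.Perm (Fin n)) :
    pext n τ (Fin.last n) = Fin.last n := by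
  simp [pext, Equiv.permCongr_apply]

open Finset Equiv in
lemma Pmat_aux (k : ℕ) :
    Nat.card {σ : Equiv.Perm (Fin (k + 2 + 2)) // ∀ i, Pmat (k+2) i (σ i) ≠ 0} =
      2 * Nat.card {σ : Equiv.Perm (Fin (k + 1 + 2)) // ∀ i, Pmat (k+1) i (σ i) ≠ 0} := by
  classical
  set L : Fin (k+4) := Fin.last (k+3) with hLdef
  have hL0 : L ≠ 0 := by simp [hLdef, Fin.ext_iff]
  set P : Perm (Fin (k+4)) → Prop := fun σ => ∀ i, Pmat (k+2) i (σ i) ≠ 0 with hP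
  set Q : Perm (Fin (k+3)) → Prop := fun τ => ∀ i, Pmat (k+1) i (τ i) ≠ 0 with hQ
  -- validity only depends on middle rows
  have hvalid : ∀ σ : Perm (Fin (k+4)),
      P σ ↔ (∀ i, i ≠ 0 → i ≠ L → Pmat (k+2) i (σ i) ≠ 0) := by
    intro σ
    constructor
    · exact fun h i _ _ => h i
    · intro h i
      rcases eq_or_ne i 0 with rfl | h0
      · rw [Pmat_row0]; norm_num
      rcases eq_or_ne i L with rfl | hLi
      · exact Pmat_lastrow k _
      · exact h i h0 hLi
  have key : ∀ σ : Perm (Fin (k+4)), P σ → σ L = L ∨ σ 0 = L := by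
    intro σ h
    have h2 := h (σ.symm L)
    rw [Equiv.apply_symm_apply] at h2
    by_contra hc
    push_neg at hc
    refine h2 (Pmat_lastcol k _ ?_ ?_)
    · intro h0
      exact hc.2 (by rw [← h0, Equiv.apply_symm_apply])
    · intro h0
      have h0' : σ.symm L = L := h0.trans hLdef.symm
      have h1 := congrArg σ h0'
      rw [Equiv.apply_symm_apply] at h1
      exact hc.1 h1.symm
  set A : Finset (Perm (Fin (k+4))) := univ.filter (fun σ => P σ ∧ σ L = L) with hA
  set B : Finset (Perm (Fin (k+4))) := univ.filter (fun σ => P σ ∧ σ 0 = L) with hB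
  have hcard1 : Nat.card {σ : Perm (Fin (k+4)) // P σ} = (univ.filter P).card := by
    rw [Nat.card_eq_fintype_card, Fintype.card_subtype]
  have hcard2 : Nat.card {τ : Perm (Fin (k+3)) // Q τ} = (univ.filter Q).card := by
    rw [Nat.card_eq_fintype_card, Fintype.card_subtype]
  have hdisj : Disjoint A B := by
    rw [Finset.disjoint_left]
    intro σ ha hb
    simp only [hA, hB, mem_filter] at ha hb
    exact hL0 (σ.injective (ha.2.2.trans hb.2.2.symm))
  have hsplit : (univ.filter P).card = A.card + B.card := by
    rw [← Finset.card_union_of_disjoint hdisj]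
    congr 1
    ext σ
    simp only [hA, hB, mem_filter, mem_union, mem_univ, true_and]
    constructor
    · intro h
      rcases key σ h with h1 | h1
      · exact Or.inl ⟨h, h1⟩
      · exact Or.inr ⟨h, h1⟩
    · rintro (⟨h, _⟩ | ⟨h, _⟩) <;> exact h
  -- swap bijection : B ≃ A
  have hswap : ∀ σ : Perm (Fin (k+4)), P σ → P (σ * Equiv.swap 0 L) := by
    intro σ h
    rw [hvalid] at h ⊢
    intro i hi0 hiL
    rw [Perm.mul_apply, Equiv.swap_apply_of_ne_of_ne hi0 hiL]
    exact h i hi0 hiL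
  have hBA : B.card = A.card := by
    apply Finset.card_bij (fun σ _ => σ * Equiv.swap 0 L)
    · intro σ hσ
      simp only [hB, mem_filter, mem_univ, true_and] at hσ
      simp only [hA, mem_filter, mem_univ, true_and]
      refine ⟨hswap σ hσ.1, ?_⟩
      rw [Perm.mul_apply, Equiv.swap_apply_right]
      exact hσ.2
    · intro σ1 _ σ2 _ h
      exact mul_right_cancel h
    · intro σ' hσ'
      simp only [hA, mem_filter, mem_univ, true_and] at hσ'
      refine ⟨σ' * Equiv.swap 0 L, ?_, ?_⟩
      · simp only [hB, mem_filter, mem_univ, true_and]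
        refine ⟨hswap σ' hσ'.1, ?_⟩
        rw [Perm.mul_apply, Equiv.swap_apply_left]
        exact hσ'.2
      · rw [mul_assoc, Equiv.swap_mul_self, mul_one]
  -- A ≃ smaller perms
  have hQA : (univ.filter Q).card = A.card := by
    apply Finset.card_bij (fun τ _ => pext (k+3) τ)
    · intro τ hτ
      simp only [hQ, mem_filter, mem_univ, true_and] at hτ
      simp only [hA, mem_filter, mem_univ, true_and]
      refine ⟨?_, pext_last _ _⟩
      rw [hvalid]
      intro i _ hiL
      obtain ⟨j, rfl⟩ : ∃ j : Fin (k+3), i = j.castSucc := by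
        refine ⟨⟨i, ?_⟩, by ext; simp⟩
        have := i.isLt
        have : (i:ℕ) ≠ k+3 := fun h => hiL (Fin.ext h)
        omega
      rw [pext_castSucc, Pmat_block]
      exact hτ j
    · intro τ1 _ τ2 _ h
      apply Equiv.ext; intro i
      have := congrArg (fun σ : Perm (Fin (k+4)) => σ i.castSucc) h
      simp only [pext_castSucc] at this
      exact Fin.castSucc_injective _ this
    · intro σ hσ
      simp only [hA, mem_filter, mem_univ, true_and] at hσ
      obtain ⟨hPσ, hσL⟩ := hσ
      have hne : ∀ i : Fin (k+3), σ i.castSucc ≠ Fin.last (k+3) := by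
        intro i h
        exact (Fin.castSucc_lt_last i).ne (σ.injective (h.trans hσL.symm))
      set f : Fin (k+3) → Fin (k+3) := fun i => (σ i.castSucc).castPred (hne i) with hf
      have hfinj : Function.Injective f := by
        intro a b h
        apply Fin.castSucc_injective _
        apply σ.injective
        have := congrArg Fin.castSucc h
        simpa [hf, Fin.castSucc_castPred] using this
      set τ : Perm (Fin (k+3)) := Equiv.ofBijective f (Finite.injective_iff_bijective.mp hfinj) with hτdef
      have hτ_app : ∀ i, (τ i).castSucc = σ i.castSucc := by
        intro i
        simp [hτdef, Equiv.ofBijective_apply, hf, Fin.castSucc_castPred]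
      refine ⟨τ, ?_, ?_⟩
      · simp only [hQ, mem_filter, mem_univ, true_and]
        intro i
        rw [← Pmat_block, hτ_app]
        exact hPσ i.castSucc
      · apply Equiv.ext; intro x
        rcases eq_or_ne x L with rfl | hx
        · rw [hσL, hLdef, pext_last]
        · obtain ⟨j, rfl⟩ : ∃ j : Fin (k+3), x = j.castSucc := by
            refine ⟨⟨x, ?_⟩, by ext; simp⟩
            have := x.isLt
            have : (x:ℕ) ≠ k+3 := fun h => hx (Fin.ext h)
            omega
          rw [pext_castSucc, hτ_app]
  show Nat.card {σ : Perm (Fin (k+4)) // P σ} = 2 * Nat.card {τ : Perm (Fin (k+3)) // Q τ}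
  rw [hcard1, hcard2, hsplit, hBA, ← hQA]
  ring


/-- For every `l ≥ 2`, the number of directed perfect matchings of the central path
digraph `P^(l)` is twice that of `P^(l−1)`. -/
theorem Pmat_directed_PM_card_succ (l : ℕ) (hl : 2 ≤ l) :
    Nat.card {σ : Equiv.Perm (Fin (l + 2)) // ∀ i, Pmat l i (σ i) ≠ 0} =
      2 * Nat.card {σ : Equiv.Perm (Fin (l - 1 + 2)) // ∀ i, Pmat (l - 1) i (σ i) ≠ 0} := by
  obtain ⟨k, rfl⟩ : ∃ k, l = k + 2 := ⟨l - 2, by omega⟩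
  exact Pmat_aux k
end

section
/- For every l ≥ 1, the number of directed perfect matchings of the central path digraph P^(l) equals 2^{l+1}; that is, the cardinality of { σ : Perm (Fin (l+2)) | ∀ i, P^(l)_{i,σ(i)} ≠ 0 } is 2^{l+1}. -/
lemma Pmat_zero_iff : ∀ (l : ℕ) (i j : Fin (l + 2)),
    Pmat l i j = 0 ↔ 1 ≤ (i : ℕ) ∧ (i : ℕ) < (j : ℕ) := by
  intro l
  induction l using Nat.twoStepInduction with
  | zero => intro i j; fin_cases i <;> fin_cases j <;> decide
  | one => intro i j; fin_cases i <;> fin_cases j <;> decide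
  | more l _ ih =>
    intro i j
    rw [Pmat]
    by_cases hi : (i : ℕ) < l + 3
    · by_cases hj : (j : ℕ) < l + 3
      · simpa [hi, hj] using ih ⟨i, hi⟩ ⟨j, hj⟩
      · have hj' : (j : ℕ) = l + 3 := by omega
        by_cases hi0 : (i : ℕ) = 0 <;> simp [hi, hj, hi0] <;> omega
    · have hi' : (i : ℕ) = l + 3 := by omega
      by_cases h : (j : ℕ) = l + 2 <;> simp [hi, h] <;> omega


def Cnd {n : ℕ} (σ : Equiv.Perm (Fin n)) : Prop :=
  ∀ i : Fin n, 1 ≤ (i : ℕ) → (σ i : ℕ) ≤ (i : ℕ)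

def liftP {n : ℕ} (τ : Equiv.Perm (Fin (n + 1))) : Equiv.Perm (Fin (n + 2)) :=
  (finSuccEquivLast).symm.permCongr (Equiv.optionCongr τ)

@[simp] lemma liftP_castSucc {n : ℕ} (τ : Equiv.Perm (Fin (n + 1))) (j : Fin (n + 1)) :
    liftP τ (Fin.castSucc j) = Fin.castSucc (τ j) := by
  simp [liftP, Equiv.permCongr_apply]

@[simp] lemma liftP_last {n : ℕ} (τ : Equiv.Perm (Fin (n + 1))) :
    liftP τ (Fin.last (n + 1)) = Fin.last (n + 1) := by
  simp [liftP, Equiv.permCongr_apply]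

def Fmap {n : ℕ} : Bool × {τ : Equiv.Perm (Fin (n + 1)) // Cnd τ} →
    {σ : Equiv.Perm (Fin (n + 2)) // Cnd σ} := fun p =>
  ⟨liftP p.2.1 * (if p.1 then Equiv.swap 0 (Fin.last (n + 1)) else 1), by
    obtain ⟨b, τ, hτ⟩ := p
    intro i hi
    induction i using Fin.lastCases with
    | last =>
      cases b with
      | false => simp
      | true =>
        have h0 : (0 : Fin (n + 2)) = Fin.castSucc 0 := by simp
        simp only [if_true, Equiv.Perm.mul_apply, Equiv.swap_apply_right, h0,
          liftP_castSucc]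
        simp [Fin.last]
    | cast j =>
      have hj1 : 1 ≤ (j : ℕ) := by simpa using hi
      have hne0 : Fin.castSucc j ≠ 0 := by
        intro h
        have := congrArg Fin.val h
        simp only [Fin.coe_castSucc, Fin.val_zero] at this
        omega
      have hneL : Fin.castSucc j ≠ Fin.last (n + 1) := (Fin.castSucc_lt_last j).ne
      have key : (liftP τ * (if b then Equiv.swap 0 (Fin.last (n + 1)) else 1))
          (Fin.castSucc j) = Fin.castSucc (τ j) := by
        cases b <;> simp [Equiv.swap_apply_of_ne_of_ne hne0 hneL]
      rw [key]
      simpa using hτ j hj1⟩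

lemma Fmap_val_zero_iff {n : ℕ} (b : Bool) (τ : Equiv.Perm (Fin (n + 1))) :
    ((liftP τ * (if b then Equiv.swap 0 (Fin.last (n + 1)) else 1)) 0
      = Fin.last (n + 1)) ↔ b = true := by
  have e0 : (0 : Fin (n + 2)) = Fin.castSucc 0 := by simp
  cases b with
  | false =>
    simp only [if_neg Bool.false_ne_true, mul_one, e0, liftP_castSucc]
    simpa using (Fin.castSucc_lt_last (τ 0)).ne
  | true => simp

lemma Fmap_injective {n : ℕ} : Function.Injective (Fmap (n := n)) := by
  rintro ⟨b₁, τ₁, h₁⟩ ⟨b₂, τ₂, h₂⟩ h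
  have h' : liftP τ₁ * (if b₁ then Equiv.swap 0 (Fin.last (n + 1)) else 1)
      = liftP τ₂ * (if b₂ then Equiv.swap 0 (Fin.last (n + 1)) else 1) :=
    congrArg Subtype.val h
  have h0 := congrArg (fun σ : Equiv.Perm (Fin (n + 2)) => σ 0) h'
  have hb : b₁ = b₂ := by
    have := (Fmap_val_zero_iff b₁ τ₁).symm.trans (h0 ▸ Fmap_val_zero_iff b₂ τ₂)
    cases b₁ <;> cases b₂ <;> simp_all
  subst hb
  have hτ : liftP τ₁ = liftP τ₂ := mul_right_cancel h'
  have : τ₁ = τ₂ := by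
    ext j
    have := congrArg (fun σ : Equiv.Perm (Fin (n + 2)) => σ (Fin.castSucc j)) hτ
    simp only [liftP_castSucc] at this
    exact congrArg Fin.val (Fin.castSucc_injective _ this)
  simp [this]

lemma exists_liftP {n : ℕ} (σ' : Equiv.Perm (Fin (n + 2)))
    (hL : σ' (Fin.last (n + 1)) = Fin.last (n + 1)) :
    ∃ τ : Equiv.Perm (Fin (n + 1)), liftP τ = σ' := by
  have hlt : ∀ j : Fin (n + 1), (σ' (Fin.castSucc j) : ℕ) < n + 1 := by
    intro j
    have hne : σ' (Fin.castSucc j) ≠ Fin.last (n + 1) := by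
      intro h
      exact (Fin.castSucc_lt_last j).ne (σ'.injective (h.trans hL.symm))
    have := Fin.val_lt_last hne
    simpa using this
  set t : Fin (n + 1) → Fin (n + 1) := fun j => ⟨(σ' (Fin.castSucc j) : ℕ), hlt j⟩ with ht
  have tinj : Function.Injective t := by
    intro a b hab
    have hv : (t a).val = (t b).val := congrArg Fin.val hab
    have : σ' (Fin.castSucc a) = σ' (Fin.castSucc b) := Fin.ext hv
    exact Fin.castSucc_injective _ (σ'.injective this)
  refine ⟨Equiv.ofBijective t (Finite.injective_iff_bijective.mp tinj), ?_⟩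
  ext i
  induction i using Fin.lastCases with
  | last => simp [hL]
  | cast j =>
    rw [liftP_castSucc]
    show Fin.val (Fin.castSucc (t j)) = _
    simp [ht]

lemma castSucc_cnd {n : ℕ} {σ' : Equiv.Perm (Fin (n + 2))} {τ : Equiv.Perm (Fin (n + 1))}
    (hlift : liftP τ = σ')
    (hc : ∀ j : Fin (n + 1), 1 ≤ (j : ℕ) → (σ' (Fin.castSucc j) : ℕ) ≤ (j : ℕ)) :
    Cnd τ := by
  intro j hj
  have : Fin.castSucc (τ j) = σ' (Fin.castSucc j) := by
    rw [← hlift, liftP_castSucc]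
  have hv : (τ j : ℕ) = (σ' (Fin.castSucc j) : ℕ) := by
    simpa using congrArg Fin.val this
  rw [hv]
  exact hc j hj

lemma Fmap_surjective {n : ℕ} : Function.Surjective (Fmap (n := n)) := by
  rintro ⟨σ, hσ⟩
  -- key fact: σ⁻¹ (last) ∈ {0, last}
  have hlast : σ 0 = Fin.last (n + 1) ∨ σ (Fin.last (n + 1)) = Fin.last (n + 1) := by
    obtain ⟨j, hj⟩ : ∃ j, σ j = Fin.last (n + 1) := ⟨σ.symm _, σ.apply_symm_apply _⟩
    induction j using Fin.lastCases with
    | last => exact Or.inr hj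
    | cast k =>
      rcases Nat.eq_zero_or_pos (k : ℕ) with hk | hk
      · left
        have : Fin.castSucc k = 0 := by
          apply Fin.ext; simpa using hk
        rwa [this] at hj
      · exfalso
        have := hσ (Fin.castSucc k) (by simp; omega)
        rw [hj] at this
        simp [Fin.last] at this
        omega
  by_cases hb : σ 0 = Fin.last (n + 1)
  · -- b = true
    set σ' := σ * Equiv.swap 0 (Fin.last (n + 1)) with hσ'
    have hL : σ' (Fin.last (n + 1)) = Fin.last (n + 1) := by
      simp [hσ', Equiv.swap_apply_right, hb]
    obtain ⟨τ, hlift⟩ := exists_liftP σ' hL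
    have hswap : ∀ j : Fin (n + 1), 1 ≤ (j : ℕ) →
        σ' (Fin.castSucc j) = σ (Fin.castSucc j) := by
      intro j hj
      have hne0 : Fin.castSucc j ≠ 0 := by
        intro h
        have := congrArg Fin.val h
        simp only [Fin.coe_castSucc, Fin.val_zero] at this
        omega
      rw [hσ']
      simp [Equiv.swap_apply_of_ne_of_ne hne0 (Fin.castSucc_lt_last j).ne]
    have hcnd : Cnd τ := by
      apply castSucc_cnd hlift
      intro j hj
      rw [hswap j hj]
      simpa using hσ (Fin.castSucc j) (by simpa using hj)
    refine ⟨(true, ⟨τ, hcnd⟩), ?_⟩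
    apply Subtype.ext
    show liftP τ * Equiv.swap 0 (Fin.last (n + 1)) = σ
    rw [hlift, hσ', mul_assoc, Equiv.swap_mul_self, mul_one]
  · -- b = false
    have hL : σ (Fin.last (n + 1)) = Fin.last (n + 1) := hlast.resolve_left hb
    obtain ⟨τ, hlift⟩ := exists_liftP σ hL
    have hcnd : Cnd τ := by
      apply castSucc_cnd hlift
      intro j hj
      simpa using hσ (Fin.castSucc j) (by simpa using hj)
    refine ⟨(false, ⟨τ, hcnd⟩), ?_⟩
    apply Subtype.ext
    show liftP τ * 1 = σ
    rw [hlift, mul_one]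

lemma count_aux : ∀ n : ℕ, Nat.card {σ : Equiv.Perm (Fin (n + 1)) // Cnd σ} = 2 ^ n := by
  intro n
  induction n with
  | zero =>
    have huniq : ∀ σ : Equiv.Perm (Fin 1), Cnd σ := by
      intro σ i hi
      have : (i : ℕ) < 1 := i.isLt
      omega
    rw [Nat.card_congr (Equiv.subtypeUnivEquiv huniq)]
    simp [Nat.card_eq_fintype_card]
  | succ n ih =>
    have e := Equiv.ofBijective _ ⟨Fmap_injective (n := n), Fmap_surjective⟩
    rw [Nat.card_congr e.symm, Nat.card_prod, ih]
    simp [Nat.card_eq_fintype_card]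
    ring

/-- For every `l ≥ 1`, the central path digraph `P^(l)` has exactly `2^(l+1)` directed
perfect matchings. -/
theorem Pmat_directed_PM_card (l : ℕ) (hl : 1 ≤ l) :
    Nat.card {σ : Equiv.Perm (Fin (l + 2)) // ∀ i, Pmat l i (σ i) ≠ 0} = 2 ^ (l + 1) := by
  have e : {σ : Equiv.Perm (Fin (l + 2)) // ∀ i, Pmat l i (σ i) ≠ 0}
      ≃ {σ : Equiv.Perm (Fin (l + 2)) // Cnd σ} := by
    apply Equiv.subtypeEquivRight
    intro σ
    constructor
    · intro h i hi
      have := h i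
      rw [Ne, Pmat_zero_iff] at this
      omega
    · intro h i
      rw [Ne, Pmat_zero_iff]
      rintro ⟨h1, h2⟩
      exact absurd (h i h1) (by omega)
  rw [Nat.card_congr e]
  exact count_aux (l + 1)
end

section
/- (The GHZ sculpting digraph has exactly two directed perfect matchings.) Let N ≥ 2. The permutations σ of ZMod N satisfying σ(i) ∈ {i, i+1} for every i ∈ ZMod N are exactly the identity permutation and the translation i ↦ i + 1; in particular, there are exactly 2 such permutations. -/
/-- (The GHZ sculpting digraph has exactly two directed perfect matchings.)
For `N ≥ 2`, the permutations `σ` of `ZMod N` with `σ i ∈ {i, i + 1}` for every `i`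
are exactly the identity and the translation `i ↦ i + 1`; in particular there are
exactly `2` of them. -/
theorem GHZ_digraph_two_directed_PMs (N : ℕ) (hN : 2 ≤ N) [NeZero N] :
    {σ : Equiv.Perm (ZMod N) | ∀ i, σ i = i ∨ σ i = i + 1} =
      {Equiv.refl (ZMod N), Equiv.addRight (1 : ZMod N)} ∧
    Nat.card {σ : Equiv.Perm (ZMod N) // ∀ i, σ i = i ∨ σ i = i + 1} = 2 := by
  haveI : Fact (1 < N) := ⟨hN⟩
  have h10 : (1 : ZMod N) ≠ 0 := one_ne_zero
  have hset : {σ : Equiv.Perm (ZMod N) | ∀ i, σ i = i ∨ σ i = i + 1} =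
      {Equiv.refl (ZMod N), Equiv.addRight (1 : ZMod N)} := by
    ext σ
    simp only [Set.mem_setOf_eq, Set.mem_insert_iff, Set.mem_singleton_iff]
    constructor
    · intro hσ
      by_cases hall : ∀ i, σ i = i
      · left; ext i; simp [hall i]
      · right
        push_neg at hall
        obtain ⟨j, hj⟩ := hall
        have hj1 : σ j = j + 1 := (hσ j).resolve_left hj
        -- propagate forward
        have step : ∀ k, σ k = k + 1 → σ (k + 1) = k + 1 + 1 := by
          intro k hk
          rcases hσ (k + 1) with h | h
          · exfalso
            have : σ (k + 1) = σ k := by rw [hk, h]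
            have : k + 1 = k := σ.injective this
            exact h10 (by linear_combination this)
          · exact h
        have prop : ∀ n : ℕ, σ (j + n) = j + n + 1 := by
          intro n
          induction n with
          | zero => simpa using hj1
          | succ m ih =>
            have := step (j + m) ih
            push_cast
            convert this using 2 <;> push_cast <;> ring
        ext i
        obtain ⟨n, hn⟩ := ZMod.natCast_rightInverse.surjective (i - j)
        have := prop n
        rw [hn] at this
        simp only [Equiv.coe_addRight]
        convert this using 2 <;> ring
    · rintro (rfl | rfl) i
      · left; rfl
      · right; rfl
  refine ⟨hset, ?_⟩
  have hne : Equiv.refl (ZMod N) ≠ Equiv.addRight (1 : ZMod N) := by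
    intro h
    have := congrArg (fun e => (e : Equiv.Perm (ZMod N)) 0) h
    simp at this
  have : Nat.card {σ : Equiv.Perm (ZMod N) // ∀ i, σ i = i ∨ σ i = i + 1} =
      ({Equiv.refl (ZMod N), Equiv.addRight (1 : ZMod N)} : Set (Equiv.Perm (ZMod N))).ncard := by
    rw [← Nat.card_coe_set_eq, ← hset]
    rfl
  rw [this, Set.ncard_pair hne]
end
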